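/- Let C₁, C₂ be hypothesis classes and h a measurable classifier with h ∉ C₁ ∩ C₂ allowed. Let θ_h^(1), θ_h^(2), θ_h be the disagreement coefficients of h with respect to C₁, C₂, and C₁ ∪ C₂ under a distribution D on X. Then θ_h ≤ θ_h^(1) + θ_h^(2) + 2. -/

import Mathlib

open MeasureTheory ENNReal Set

/-- Region of disagreement of a set of binary classifiers. -/
def DIS {X : Type*} (V : Set (X → Bool)) : Set X :=
  {x | ∃ h₁ ∈ V, ∃ h₂ ∈ V, h₁ x ≠ h₂ x}

/-- The ball of radius `r` around `h` within the class `C`, under marginal `μ`. -/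
def dball {X : Type*} [MeasurableSpace X] (C : Set (X → Bool)) (μ : Measure X)
    (h : X → Bool) (r : ℝ≥0∞) : Set (X → Bool) :=
  {h' ∈ C | μ {x | h x ≠ h' x} ≤ r}

/-- The disagreement coefficient of `h` with respect to `C` under `μ` (with `r₀ = 0`). -/
noncomputable def dcoef {X : Type*} [MeasurableSpace X] (C : Set (X → Bool)) (μ : Measure X)
    (h : X → Bool) : ℝ≥0∞ :=
  ⨆ (r : ℝ≥0∞) (_ : 0 < r), μ (DIS (dball C μ h r)) / r

lemma dball_union {X : Type*} [MeasurableSpace X] (C₁ C₂ : Set (X → Bool)) (μ : Measure X)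
    (h : X → Bool) (r : ℝ≥0∞) :
    dball (C₁ ∪ C₂) μ h r = dball C₁ μ h r ∪ dball C₂ μ h r := by
  ext g; simp only [dball, Set.mem_union, Set.mem_setOf_eq]; tauto

lemma dcoef_ratio_le {X : Type*} [MeasurableSpace X] (C : Set (X → Bool)) (μ : Measure X)
    (h : X → Bool) {r : ℝ≥0∞} (hr : 0 < r) :
    μ (DIS (dball C μ h r)) / r ≤ dcoef C μ h :=
  le_iSup₂ (f := fun r (_ : 0 < r) => μ (DIS (dball C μ h r)) / r) r hr

/-- Finite unions, general case (`h` need not be in `C₁ ∩ C₂`):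
`θ_h ≤ θ_h^(1) + θ_h^(2) + 2`. -/
theorem union_disagreement_coefficient_general
    {X : Type*} [MeasurableSpace X]
    (D : Measure X) [IsProbabilityMeasure D]
    (C₁ C₂ : Set (X → Bool)) (h : X → Bool) :
    dcoef (C₁ ∪ C₂) D h ≤ dcoef C₁ D h + dcoef C₂ D h + 2 := by
  refine iSup₂_le fun r hr => ?_
  rw [dball_union]
  set V₁ := dball C₁ D h r with hV₁
  set V₂ := dball C₂ D h r with hV₂
  rcases eq_empty_or_nonempty V₁ with hE | ⟨g₁, hg₁⟩
  · rw [hE, empty_union]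
    calc D (DIS V₂) / r ≤ dcoef C₂ D h := dcoef_ratio_le _ _ _ hr
      _ ≤ _ := by
        calc dcoef C₂ D h ≤ dcoef C₁ D h + dcoef C₂ D h := le_add_self
          _ ≤ _ := le_add_of_nonneg_right zero_le
  rcases eq_empty_or_nonempty V₂ with hE | ⟨g₂, hg₂⟩
  · rw [hE, union_empty]
    calc D (DIS V₁) / r ≤ dcoef C₁ D h := dcoef_ratio_le _ _ _ hr
      _ ≤ _ := by
        calc dcoef C₁ D h ≤ dcoef C₁ D h + dcoef C₂ D h := le_add_right le_rfl
          _ ≤ _ := le_add_of_nonneg_right zero_le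
  have hsub : DIS (V₁ ∪ V₂) ⊆
      DIS V₁ ∪ DIS V₂ ∪ ({x | h x ≠ g₁ x} ∪ {x | h x ≠ g₂ x}) := by
    rintro x ⟨f₁, hf₁, f₂, hf₂, hne⟩
    by_cases e1 : h x = g₁ x
    · by_cases e2 : h x = g₂ x
      · -- all of h, g₁, g₂ agree at x
        rcases hf₁ with hf₁ | hf₁ <;> rcases hf₂ with hf₂ | hf₂
        · exact Or.inl (Or.inl ⟨f₁, hf₁, f₂, hf₂, hne⟩)
        · by_cases e3 : f₁ x = g₁ x
          · refine Or.inl (Or.inr ⟨g₂, hg₂, f₂, hf₂, ?_⟩)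
            intro hcon; apply hne; rw [e3, ← e1, e2, hcon]
          · exact Or.inl (Or.inl ⟨f₁, hf₁, g₁, hg₁, e3⟩)
        · by_cases e3 : f₁ x = g₂ x
          · refine Or.inl (Or.inl ⟨g₁, hg₁, f₂, hf₂, ?_⟩)
            intro hcon; apply hne; rw [e3, ← e2, e1, hcon]
          · exact Or.inl (Or.inr ⟨f₁, hf₁, g₂, hg₂, e3⟩)
        · exact Or.inl (Or.inr ⟨f₁, hf₁, f₂, hf₂, hne⟩)
      · exact Or.inr (Or.inr e2)
    · exact Or.inr (Or.inl e1)
  have hmeas : D (DIS (V₁ ∪ V₂)) ≤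
      D (DIS V₁) + D (DIS V₂) + (D {x | h x ≠ g₁ x} + D {x | h x ≠ g₂ x}) := by
    calc D (DIS (V₁ ∪ V₂)) ≤ D (DIS V₁ ∪ DIS V₂ ∪ ({x | h x ≠ g₁ x} ∪ {x | h x ≠ g₂ x})) :=
          measure_mono hsub
      _ ≤ D (DIS V₁ ∪ DIS V₂) + D ({x | h x ≠ g₁ x} ∪ {x | h x ≠ g₂ x}) := measure_union_le _ _
      _ ≤ _ := add_le_add (measure_union_le _ _) (measure_union_le _ _)
  calc D (DIS (V₁ ∪ V₂)) / r
      ≤ (D (DIS V₁) + D (DIS V₂) + (D {x | h x ≠ g₁ x} + D {x | h x ≠ g₂ x})) / r :=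
        ENNReal.div_le_div_right hmeas r
    _ = D (DIS V₁) / r + D (DIS V₂) / r
        + (D {x | h x ≠ g₁ x} / r + D {x | h x ≠ g₂ x} / r) := by
        simp [ENNReal.add_div]
    _ ≤ dcoef C₁ D h + dcoef C₂ D h + (1 + 1) := by
        refine add_le_add (add_le_add (dcoef_ratio_le _ _ _ hr) (dcoef_ratio_le _ _ _ hr)) ?_
        refine add_le_add ?_ ?_
        · exact ENNReal.div_le_of_le_mul (by simpa using hg₁.2)
        · exact ENNReal.div_le_of_le_mul (by simpa using hg₂.2)
    _ = dcoef C₁ D h + dcoef C₂ D h + 2 := by norm_num
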